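/- Let G be a triangle-free graph on n vertices with maximum degree at most d. Then for all λ > 0, P_G(λ) ≥ exp( (n/(2d)) · [ W(d·log(1+λ))² + 2·W(d·log(1+λ)) ] ), where P_G is the independence polynomial and W is the Lambert W function. -/

import Mathlib

open Finset MeasureTheory Real
open scoped Classical

noncomputable def indSets {V : Type*} [Fintype V] (G : SimpleGraph V) : Finset (Finset V) :=
  Finset.univ.filter (fun s => ∀ u ∈ s, ∀ v ∈ s, ¬ G.Adj u v)

/-- The independence polynomial (hard-core partition function). -/
noncomputable def indPoly {V : Type*} [Fintype V] (G : SimpleGraph V) (x : ℝ) : ℝ :=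
  ∑ s ∈ indSets G, x ^ s.card

/-- Expected size of an independent set from the hard-core model at fugacity x. -/
noncomputable def avgSize {V : Type*} [Fintype V] (G : SimpleGraph V) (x : ℝ) : ℝ :=
  x * deriv (indPoly G) x / indPoly G x


lemma lemA (s : ℝ) {x l : ℝ} (hx : 0 < x) (hl : 0 ≤ l) :
    (1+s)*(x+l) ≤ (1+l)*Real.exp s + x * Real.log x := by
  have hxne : x ≠ 0 := ne_of_gt hx
  have h1 : Real.log (Real.exp s / x) ≤ Real.exp s / x - 1 :=
    Real.log_le_sub_one_of_pos (by positivity)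
  have h2 : Real.log (Real.exp s / x) = s - Real.log x := by
    rw [Real.log_div (Real.exp_ne_zero s) hxne, Real.log_exp]
  have h1' : s - Real.log x ≤ (Real.exp s - x)/x := by
    rw [sub_div, div_self hxne]; rw [h2] at h1; exact h1
  have h4 : (s - Real.log x) * x ≤ Real.exp s - x := (le_div_iff₀ hx).mp h1'
  have h3 : s + 1 ≤ Real.exp s := Real.add_one_le_exp s
  nlinarith

lemma pow_sum {V : Type*} [DecidableEq V] (t : ℝ) (F : Finset V) :
    ∑ S ∈ F.powerset, t^S.card = (1+t)^F.card := by
  induction F using Finset.induction_on with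
  | empty => simp
  | @insert a F ha ih =>
    rw [Finset.sum_powerset_insert ha, Finset.card_insert_of_notMem ha, pow_succ]
    have h : ∀ S ∈ F.powerset, t ^ (insert a S).card = t ^ S.card * t := by
      intro S hS
      rw [Finset.card_insert_of_notMem (fun h => ha (Finset.mem_powerset.mp hS h)), pow_succ]
    rw [Finset.sum_congr rfl h, ← Finset.sum_mul, ih]
    ring

lemma pow_sum' {V : Type*} [DecidableEq V] (t : ℝ) (F : Finset V) :
    (∑ S ∈ F.powerset, (S.card : ℝ) * t^S.card) * (1+t) = F.card * t * (1+t)^F.card := by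
  induction F using Finset.induction_on with
  | empty => simp
  | @insert a F ha ih =>
    rw [Finset.sum_powerset_insert ha, Finset.card_insert_of_notMem ha]
    have h : ∀ S ∈ F.powerset, ((insert a S).card : ℝ) * t ^ (insert a S).card
        = ((S.card : ℝ) * t ^ S.card) * t + t ^ S.card * t := by
      intro S hS
      have haS : a ∉ S := fun h => ha (Finset.mem_powerset.mp hS h)
      rw [Finset.card_insert_of_notMem haS]
      push_cast
      rw [pow_succ]
      ring
    rw [Finset.sum_congr rfl h, Finset.sum_add_distrib, ← Finset.sum_mul, ← Finset.sum_mul,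
      pow_sum]
    set A := ∑ S ∈ F.powerset, (S.card : ℝ) * t ^ S.card with hA
    have expand : (A + (A * t + (1+t) ^ F.card * t)) * (1+t)
        = (A * (1+t)) * (1+t) + t * ((1+t) ^ F.card * (1+t)) := by ring
    rw [expand, ih, ← pow_succ]
    push_cast
    ring




section Graph
variable {V : Type*} [Fintype V] (G : SimpleGraph V)

noncomputable def nbr (v : V) : Finset V := Finset.univ.filter (fun u => G.Adj v u)
noncomputable def cls (v : V) : Finset V := insert v (nbr G v)
noncomputable def freeN (v : V) (J : Finset V) : Finset V :=
  (nbr G v).filter (fun u => ∀ j ∈ J, ¬ G.Adj u j)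
noncomputable def famS (v : V) (J : Finset V) : Finset (Finset V) :=
  insert {v} (freeN G v J).powerset
noncomputable def Jset (v : V) : Finset (Finset V) :=
  (indSets G).filter (fun J => Disjoint J (cls G v))

lemma mem_indSets {I : Finset V} : I ∈ indSets G ↔ ∀ u ∈ I, ∀ v ∈ I, ¬ G.Adj u v := by
  simp [indSets]

lemma indSets_mono {I J : Finset V} (hJ : J ∈ indSets G) (hIJ : I ⊆ J) : I ∈ indSets G := by
  rw [mem_indSets] at *
  exact fun u hu v hv => hJ u (hIJ hu) v (hIJ hv)

lemma empty_mem_indSets : ∅ ∈ indSets G := by simp [indSets]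

lemma mem_nbr {v u : V} : u ∈ nbr G v ↔ G.Adj v u := by simp [nbr]

lemma not_self_mem_nbr (v : V) : v ∉ nbr G v := by simp [nbr]

lemma famS_subset_cls (v : V) (J : Finset V) {S : Finset V} (hS : S ∈ famS G v J) :
    S ⊆ cls G v := by
  rw [famS, Finset.mem_insert] at hS
  rcases hS with rfl | hS
  · simp [cls]
  · exact (Finset.mem_powerset.mp hS).trans
      ((Finset.filter_subset _ _).trans (Finset.subset_insert _ _))

lemma maps_to_Jset (v : V) {I : Finset V} (hI : I ∈ indSets G) :
    I \ cls G v ∈ Jset G v := by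
  rw [Jset, Finset.mem_filter]
  exact ⟨indSets_mono G hI (Finset.sdiff_subset), Finset.sdiff_disjoint⟩

lemma disjoint_famS (v : V) {J : Finset V} (hJ : J ∈ Jset G v) {S : Finset V}
    (hS : S ∈ famS G v J) : Disjoint S J := by
  rw [Jset, Finset.mem_filter] at hJ
  exact Finset.disjoint_of_subset_left (famS_subset_cls G v J hS) hJ.2.symm

lemma card_union_famS (v : V) {J : Finset V} (hJ : J ∈ Jset G v) {S : Finset V}
    (hS : S ∈ famS G v J) : (S ∪ J).card = S.card + J.card :=
  Finset.card_union_of_disjoint (disjoint_famS G v hJ hS)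

lemma union_inter_cls (v : V) {J : Finset V} (hJ : J ∈ Jset G v) {S : Finset V}
    (hS : S ∈ famS G v J) : (S ∪ J) ∩ cls G v = S := by
  rw [Jset, Finset.mem_filter] at hJ
  rw [Finset.union_inter_distrib_right,
    Finset.inter_eq_left.mpr (famS_subset_cls G v J hS),
    Finset.disjoint_iff_inter_eq_empty.mp hJ.2, Finset.union_empty]

lemma union_inj_on (v : V) {J : Finset V} (hJ : J ∈ Jset G v) :
    ∀ S ∈ famS G v J, ∀ S' ∈ famS G v J, S ∪ J = S' ∪ J → S = S' := by
  intro S hS S' hS' h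
  rw [← union_inter_cls G v hJ hS, ← union_inter_cls G v hJ hS', h]

lemma fiber_eq (htf : G.CliqueFree 3) (v : V) {J : Finset V} (hJ : J ∈ Jset G v) :
    (indSets G).filter (fun I => I \ cls G v = J) = (famS G v J).image (fun S => S ∪ J) := by
  have hJ' := hJ
  rw [Jset, Finset.mem_filter] at hJ'
  obtain ⟨hJind, hJdis⟩ := hJ'
  have hJind' := (mem_indSets G).mp hJind
  ext I
  rw [Finset.mem_filter, Finset.mem_image]
  constructor
  · rintro ⟨hI, hdiff⟩
    have hind := (mem_indSets G).mp hI
    refine ⟨I ∩ cls G v, ?_, ?_⟩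
    · rw [famS, Finset.mem_insert]
      by_cases hv : v ∈ I
      · left
        ext u
        simp only [Finset.mem_inter, Finset.mem_singleton]
        constructor
        · rintro ⟨huI, huC⟩
          rw [cls, Finset.mem_insert, mem_nbr] at huC
          rcases huC with rfl | hadj
          · rfl
          · exact absurd hadj (hind v hv u huI)
        · rintro rfl; exact ⟨hv, by simp [cls]⟩
      · right
        rw [Finset.mem_powerset]
        intro u hu
        rw [Finset.mem_inter] at hu
        obtain ⟨huI, huC⟩ := hu
        rw [cls, Finset.mem_insert, mem_nbr] at huC
        rcases huC with rfl | hadj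
        · exact absurd huI hv
        · rw [freeN, Finset.mem_filter, mem_nbr]
          refine ⟨hadj, fun j hj => hind u huI j ?_⟩
          rw [← hdiff] at hj
          exact (Finset.mem_sdiff.mp hj).1
    · rw [← hdiff]
      ext u
      simp only [Finset.mem_union, Finset.mem_inter, Finset.mem_sdiff]
      tauto
  · rintro ⟨S, hS, rfl⟩
    have hSC := famS_subset_cls G v J hS
    constructor
    · -- independence
      rw [mem_indSets]
      intro a ha b hb
      rw [Finset.mem_union] at ha hb
      rw [famS, Finset.mem_insert] at hS
      have hJnotadj : ∀ x ∈ S, ∀ j ∈ J, ¬ G.Adj x j := by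
        rcases hS with rfl | hS
        · intro x hx j hj
          rw [Finset.mem_singleton] at hx
          subst hx
          intro hadj
          exact Finset.disjoint_left.mp hJdis hj
            (Finset.mem_insert_of_mem ((mem_nbr G).mpr hadj))
        · intro x hx j hj
          have := Finset.mem_powerset.mp hS hx
          rw [freeN, Finset.mem_filter] at this
          exact this.2 j hj
      rcases ha with ha | ha
      · rcases hb with hb | hb
        · -- both in S
          rcases hS with rfl | hS
          · rw [Finset.mem_singleton] at ha hb
            subst ha; subst hb; exact G.irrefl
          · have haf := Finset.mem_powerset.mp hS ha
            have hbf := Finset.mem_powerset.mp hS hb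
            rw [freeN, Finset.mem_filter, mem_nbr] at haf hbf
            intro hadj
            exact htf {v, a, b} (SimpleGraph.is3Clique_triple_iff.mpr ⟨haf.1, hbf.1, hadj⟩)
        · exact hJnotadj a ha b hb
      · rcases hb with hb | hb
        · intro hadj; exact hJnotadj b hb a ha hadj.symm
        · exact hJind' a ha b hb
    · -- sdiff
      rw [Finset.union_sdiff_distrib,
        Finset.sdiff_eq_empty_iff_subset.mpr hSC,
        Finset.empty_union, Finset.sdiff_eq_self_of_disjoint hJdis]

end Graph

lemma keynum {t s : ℝ} (ht : 0 < t) (hs : 0 < s) (k : ℕ) (A : ℝ)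
    (hA : A * (1+t) = k * t * (1+t)^k) :
    (1+s) * Real.exp (-s) * t / (1+t) * (t + (1+t)^k)
      ≤ t + (Real.exp (-s) * Real.log (1+t)) * A := by
  have h1t : (0:ℝ) < 1 + t := by linarith
  set x : ℝ := (1+t)^k with hxdef
  have hx : 0 < x := pow_pos h1t k
  have hlog : Real.log x = k * Real.log (1+t) := by
    rw [hxdef, Real.log_pow]
  have hee : Real.exp (-s) * Real.exp s = 1 := by
    rw [← Real.exp_add]; simp
  have hlema := lemA s hx (le_of_lt ht)
  rw [div_mul_eq_mul_div, div_le_iff₀ h1t]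
  have hA' : (k:ℝ) * t * x = A * (1+t) := hA.symm
  calc (1+s) * Real.exp (-s) * t * (t + x)
      = (t * Real.exp (-s)) * ((1+s) * (x + t)) := by ring
    _ ≤ (t * Real.exp (-s)) * ((1+t) * Real.exp s + x * Real.log x) := by
        apply mul_le_mul_of_nonneg_left hlema (by positivity)
    _ = t * (1+t) * (Real.exp (-s) * Real.exp s)
        + (Real.exp (-s) * Real.log (1+t)) * ((k:ℝ) * t * x) := by rw [hlog]; ring
    _ = (t + Real.exp (-s) * Real.log (1+t) * A) * (1+t) := by rw [hee, hA']; ring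
section Graph2
variable {V : Type*} [Fintype V] (G : SimpleGraph V)

lemma v_not_mem_J (v : V) {J : Finset V} (hJ : J ∈ Jset G v) : v ∉ J := by
  rw [Jset, Finset.mem_filter] at hJ
  exact fun h => Finset.disjoint_left.mp hJ.2 h (Finset.mem_insert_self v _)

lemma J_inter_nbr (v : V) {J : Finset V} (hJ : J ∈ Jset G v) : J ∩ nbr G v = ∅ := by
  rw [Jset, Finset.mem_filter] at hJ
  exact Finset.disjoint_iff_inter_eq_empty.mp
    (Finset.disjoint_of_subset_right (Finset.subset_insert _ _) hJ.2)

lemma singleton_mem_famS (v : V) (J : Finset V) : {v} ∈ famS G v J :=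
  Finset.mem_insert_self _ _

lemma singleton_not_mem_powF (v : V) (J : Finset V) :
    ({v} : Finset V) ∉ (freeN G v J).powerset := by
  rw [Finset.mem_powerset, Finset.singleton_subset_iff, freeN, Finset.mem_filter]
  exact fun h => not_self_mem_nbr G v h.1

lemma powF_mem_famS (v : V) (J : Finset V) {S : Finset V}
    (hS : S ∈ (freeN G v J).powerset) : S ∈ famS G v J := Finset.mem_insert_of_mem hS

lemma perJ (htf : G.CliqueFree 3) {t s : ℝ} (ht : 0 < t) (hs : 0 < s) (v : V)
    {J : Finset V} (hJ : J ∈ Jset G v) :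
    (1+s) * Real.exp (-s) * t / (1+t) *
        ∑ I ∈ (indSets G).filter (fun I => I \ cls G v = J), t ^ I.card
      ≤ ∑ I ∈ (indSets G).filter (fun I => I \ cls G v = J), t ^ I.card *
          ((if v ∈ I then (1:ℝ) else 0)
            + (Real.exp (-s) * Real.log (1+t)) * ((I ∩ nbr G v).card)) := by
  set c := Real.exp (-s) * Real.log (1+t) with hc
  set M := (1+s) * Real.exp (-s) * t / (1+t) with hM
  rw [fiber_eq G htf v hJ]
  rw [Finset.sum_image (union_inj_on G v hJ), Finset.sum_image (union_inj_on G v hJ)]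
  rw [famS, Finset.sum_insert (singleton_not_mem_powF G v J),
    Finset.sum_insert (singleton_not_mem_powF G v J)]
  have hcardv : ({v} ∪ J).card = 1 + J.card := by
    rw [card_union_famS G v hJ (singleton_mem_famS G v J), Finset.card_singleton]
  have hintv : ({v} ∪ J) ∩ nbr G v = ∅ := by
    rw [Finset.union_inter_distrib_right, J_inter_nbr G v hJ, Finset.union_empty]
    rw [Finset.singleton_inter_of_notMem (not_self_mem_nbr G v)]
  have hvin : v ∈ {v} ∪ J := Finset.mem_union_left _ (Finset.mem_singleton_self v)
  have hL : ∀ S ∈ (freeN G v J).powerset,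
      t ^ (S ∪ J).card = t ^ J.card * t ^ S.card := by
    intro S hS
    rw [card_union_famS G v hJ (powF_mem_famS G v J hS), pow_add]
    ring
  have hR : ∀ S ∈ (freeN G v J).powerset,
      t ^ (S ∪ J).card * ((if v ∈ S ∪ J then (1:ℝ) else 0) + c * ((S ∪ J) ∩ nbr G v).card)
        = (c * t ^ J.card) * ((S.card : ℝ) * t ^ S.card) := by
    intro S hS
    have hSnbr : S ⊆ nbr G v :=
      (Finset.mem_powerset.mp hS).trans (Finset.filter_subset _ _)
    have hvS : v ∉ S ∪ J := by
      rw [Finset.mem_union]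
      rintro (h | h)
      · exact not_self_mem_nbr G v (hSnbr h)
      · exact v_not_mem_J G v hJ h
    have hint : (S ∪ J) ∩ nbr G v = S := by
      rw [Finset.union_inter_distrib_right, J_inter_nbr G v hJ, Finset.union_empty,
        Finset.inter_eq_left.mpr hSnbr]
    rw [if_neg hvS, hint, card_union_famS G v hJ (powF_mem_famS G v J hS), pow_add]
    ring
  have e3 : t ^ ({v} ∪ J).card = t ^ J.card * t := by
    rw [hcardv, pow_add, pow_one]; ring
  rw [mul_add, Finset.mul_sum]
  have e1 : ∑ x ∈ (freeN G v J).powerset, M * t ^ (x ∪ J).card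
      = (M * t ^ J.card) * (1+t) ^ (freeN G v J).card := by
    rw [Finset.sum_congr rfl (fun S hS => by rw [hL S hS]; ring :
      ∀ S ∈ (freeN G v J).powerset, M * t ^ (S ∪ J).card = (M * t ^ J.card) * t ^ S.card),
      ← Finset.mul_sum, pow_sum]
  have e2 : ∑ x ∈ (freeN G v J).powerset,
      t ^ (x ∪ J).card * ((if v ∈ x ∪ J then (1:ℝ) else 0) + c * ((x ∪ J) ∩ nbr G v).card)
      = (c * t ^ J.card) * ∑ x ∈ (freeN G v J).powerset, ((x.card : ℝ) * t ^ x.card) := by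
    rw [Finset.sum_congr rfl hR, ← Finset.mul_sum]
  have e4 : t ^ ({v} ∪ J).card * ((if v ∈ {v} ∪ J then (1:ℝ) else 0)
      + c * (({v} ∪ J) ∩ nbr G v).card) = t ^ J.card * t := by
    rw [if_pos hvin, hintv, Finset.card_empty, e3]
    push_cast; ring
  rw [e1, e2, e4, e3]
  have hA := pow_sum' t (freeN G v J)
  have key := keynum ht hs (freeN G v J).card _ hA
  rw [← hM, ← hc] at key
  have hfin := mul_le_mul_of_nonneg_left key (pow_nonneg ht.le J.card)
  nlinarith [hfin]

end Graph2
section Graph3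
variable {V : Type*} [Fintype V] (G : SimpleGraph V)

lemma keyv (htf : G.CliqueFree 3) {t s : ℝ} (ht : 0 < t) (hs : 0 < s) (v : V) :
    (1+s) * Real.exp (-s) * t / (1+t) * ∑ I ∈ indSets G, t ^ I.card
      ≤ ∑ I ∈ indSets G, t ^ I.card *
          ((if v ∈ I then (1:ℝ) else 0)
            + (Real.exp (-s) * Real.log (1+t)) * ((I ∩ nbr G v).card)) := by
  rw [← Finset.sum_fiberwise_of_maps_to (fun I hI => maps_to_Jset G v hI)
    (fun I => t ^ I.card)]
  rw [← Finset.sum_fiberwise_of_maps_to (fun I hI => maps_to_Jset G v hI)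
    (fun I => t ^ I.card * ((if v ∈ I then (1:ℝ) else 0)
      + (Real.exp (-s) * Real.log (1+t)) * ((I ∩ nbr G v).card)))]
  rw [Finset.mul_sum]
  exact Finset.sum_le_sum fun J hJ => perJ G htf ht hs v hJ

lemma sum_ind (I : Finset V) :
    ∑ v ∈ Finset.univ, (if v ∈ I then (1:ℝ) else 0) = I.card := by
  rw [Finset.sum_ite_mem, Finset.univ_inter, Finset.sum_const, nsmul_eq_mul, mul_one]

lemma nbr_card_eq_degree (u : V) : (Finset.univ.filter (fun w => u ∈ nbr G w)).card
    = G.degree u := by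
  have : Finset.univ.filter (fun w => u ∈ nbr G w) = G.neighborFinset u := by
    ext w
    simp [nbr, SimpleGraph.mem_neighborFinset, SimpleGraph.adj_comm]
  rw [this, SimpleGraph.card_neighborFinset_eq_degree]

lemma sum_nbr_card (I : Finset V) :
    ∑ v ∈ Finset.univ, ((I ∩ nbr G v).card : ℝ) = ∑ u ∈ I, (G.degree u : ℝ) := by
  have h : ∀ v : V, ((I ∩ nbr G v).card : ℝ) = ∑ u ∈ I, if u ∈ nbr G v then (1:ℝ) else 0 := by
    intro v
    rw [← Finset.filter_mem_eq_inter, Finset.sum_boole]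
  rw [Finset.sum_congr rfl (fun v _ => h v), Finset.sum_comm]
  refine Finset.sum_congr rfl fun u _ => ?_
  rw [Finset.sum_boole, nbr_card_eq_degree]

end Graph3

section Graph4
variable {V : Type*} [Fintype V] (G : SimpleGraph V)

lemma indPoly_hasDerivAt (x : ℝ) :
    HasDerivAt (indPoly G) (∑ I ∈ indSets G, (I.card : ℝ) * x ^ (I.card - 1)) x := by
  have h : indPoly G = fun y => ∑ I ∈ indSets G, y ^ I.card := rfl
  rw [h]
  exact HasDerivAt.fun_sum fun I _ => by simpa using hasDerivAt_pow I.card x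

lemma tderiv (x : ℝ) :
    x * deriv (indPoly G) x = ∑ I ∈ indSets G, (I.card : ℝ) * x ^ I.card := by
  rw [(indPoly_hasDerivAt G x).deriv, Finset.mul_sum]
  refine Finset.sum_congr rfl fun I _ => ?_
  cases hk : I.card with
  | zero => simp
  | succ m =>
    have : m + 1 - 1 = m := rfl
    rw [this, pow_succ]
    ring

lemma star {n d : ℕ} (hn : Fintype.card V = n) (htf : G.CliqueFree 3)
    (hdeg : ∀ v, G.degree v ≤ d) {t s : ℝ} (ht : 0 < t) (hs : 0 < s)
    (hse : s * Real.exp s = (d : ℝ) * Real.log (1+t)) :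
    (n : ℝ) * Real.exp (-s) / (1+t) * indPoly G t ≤ deriv (indPoly G) t := by
  have h1t : (0:ℝ) < 1 + t := by linarith
  set c := Real.exp (-s) * Real.log (1+t) with hc
  have hc0 : 0 ≤ c := by
    have := Real.log_nonneg (by linarith : (1:ℝ) ≤ 1 + t)
    positivity
  have hee : Real.exp (-s) * Real.exp s = 1 := by rw [← Real.exp_add]; simp
  have hcd : c * d = s := by
    rw [hc]; linear_combination (-(Real.exp (-s))) * hse + s * hee
  set M := (1+s) * Real.exp (-s) * t / (1+t) with hM
  set Z := indPoly G t with hZ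
  -- sum keyv over v
  have h2 : (n:ℝ) * (M * Z) ≤ ∑ v ∈ Finset.univ, ∑ I ∈ indSets G, t ^ I.card *
      ((if v ∈ I then (1:ℝ) else 0) + c * ((I ∩ nbr G v).card)) := by
    have := Finset.sum_le_sum (fun v (_ : v ∈ Finset.univ) => keyv G htf ht hs v)
    rw [Finset.sum_const, Finset.card_univ, hn, nsmul_eq_mul] at this
    exact this
  -- simplify RHS of h2
  have h3 : ∑ v ∈ Finset.univ, ∑ I ∈ indSets G, t ^ I.card *
      ((if v ∈ I then (1:ℝ) else 0) + c * ((I ∩ nbr G v).card))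
      = ∑ I ∈ indSets G, t ^ I.card * ((I.card : ℝ) + c * ∑ u ∈ I, (G.degree u : ℝ)) := by
    rw [Finset.sum_comm]
    refine Finset.sum_congr rfl fun I _ => ?_
    rw [← Finset.mul_sum, Finset.sum_add_distrib, ← Finset.mul_sum, sum_ind, sum_nbr_card]
  have h4 : ∑ I ∈ indSets G, t ^ I.card * ((I.card : ℝ) + c * ∑ u ∈ I, (G.degree u : ℝ))
      ≤ (1+s) * ∑ I ∈ indSets G, (I.card : ℝ) * t ^ I.card := by
    rw [Finset.mul_sum]
    refine Finset.sum_le_sum fun I _ => ?_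
    have hdegsum : ∑ u ∈ I, (G.degree u : ℝ) ≤ (d : ℝ) * I.card := by
      calc ∑ u ∈ I, (G.degree u : ℝ) ≤ ∑ u ∈ I, (d : ℝ) := by
            exact Finset.sum_le_sum fun u _ => by exact_mod_cast hdeg u
        _ = (d : ℝ) * I.card := by rw [Finset.sum_const, nsmul_eq_mul]; ring
    have htpow : (0:ℝ) ≤ t ^ I.card := pow_nonneg ht.le _
    have : (I.card : ℝ) + c * ∑ u ∈ I, (G.degree u : ℝ)
        ≤ (1+s) * I.card := by
      have := mul_le_mul_of_nonneg_left hdegsum hc0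
      have hcds : c * ((d:ℝ) * I.card) = s * I.card := by
        rw [← mul_assoc, hcd]
      nlinarith
    nlinarith
  have h5 : (n:ℝ) * (M * Z) ≤ (1+s) * (t * deriv (indPoly G) t) := by
    rw [tderiv]
    exact le_trans h2 (le_trans (le_of_eq h3) h4)
  have hpos : (0:ℝ) < (1+s) * t := by positivity
  rw [← mul_le_mul_iff_of_pos_right hpos]
  calc (n:ℝ) * Real.exp (-s) / (1+t) * Z * ((1+s)*t) = (n:ℝ) * (M * Z) := by
        rw [hM]; field_simp
    _ ≤ (1+s) * (t * deriv (indPoly G) t) := h5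
    _ = deriv (indPoly G) t * ((1+s)*t) := by ring

end Graph4
section Endgame
variable {V : Type*} [Fintype V] (G : SimpleGraph V)

lemma one_le_indPoly {x : ℝ} (hx : 0 ≤ x) : 1 ≤ indPoly G x := by
  calc (1:ℝ) = x ^ (∅:Finset V).card := by simp
    _ ≤ ∑ I ∈ indSets G, x ^ I.card :=
        Finset.single_le_sum (fun I _ => pow_nonneg hx _) (empty_mem_indSets G)
    _ = indPoly G x := rfl

lemma indPoly_pos {x : ℝ} (hx : 0 ≤ x) : 0 < indPoly G x :=
  lt_of_lt_of_le one_pos (one_le_indPoly G hx)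

lemma indPoly_zero : indPoly G 0 = 1 := by
  rw [indPoly, Finset.sum_eq_single (∅ : Finset V)]
  · simp
  · intro I _ hI
    exact zero_pow (fun h => hI (Finset.card_eq_zero.mp h))
  · intro h; exact absurd (empty_mem_indSets G) h

lemma indPoly_continuous : Continuous (indPoly G) := by
  have h : indPoly G = fun y => ∑ I ∈ indSets G, y ^ I.card := rfl
  rw [h]
  exact continuous_finset_sum _ fun I _ => continuous_pow _

end Endgame

theorem stmt13 {V : Type*} [Fintype V] (G : SimpleGraph V) (n d : ℕ)
    (hn : Fintype.card V = n) (hn1 : 1 ≤ n) (hd : 1 ≤ d)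
    (htf : G.CliqueFree 3) (hdeg : ∀ v, G.degree v ≤ d)
    (l w : ℝ) (hl : 0 < l) (hw : 0 < w)
    (hWe : w * Real.exp w = d * Real.log (1 + l)) :
    Real.exp (((n : ℝ) / (2 * d)) * (w ^ 2 + 2 * w)) ≤ indPoly G l := by
  have hd0 : (0:ℝ) < (d:ℝ) := by exact_mod_cast hd
  have hdne : (d:ℝ) ≠ 0 := ne_of_gt hd0
  set g : ℝ → ℝ := fun s => Real.exp (s * Real.exp s / d) - 1 with hgdef
  set Φ : ℝ → ℝ := fun s => Real.log (indPoly G (g s)) - ((n:ℝ)/d) * (s + s^2/2) with hΦdef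
  have hg0 : g 0 = 0 := by simp [hgdef]
  have hgw : g w = l := by
    have h1 : w * Real.exp w / d = Real.log (1 + l) := by
      rw [hWe]; field_simp
    simp only [hgdef]
    rw [h1, Real.exp_log (by linarith : (0:ℝ) < 1 + l)]
    ring
  have hgnonneg : ∀ s : ℝ, 0 ≤ s → 0 ≤ g s := by
    intro s hs
    have h1 : (0:ℝ) ≤ s * Real.exp s / d := by positivity
    have := Real.one_le_exp h1
    simp only [hgdef]; linarith
  have hgpos : ∀ s : ℝ, 0 < s → 0 < g s := by
    intro s hs
    have h1 : (0:ℝ) < s * Real.exp s / d := by positivity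
    have := Real.add_one_le_exp (s * Real.exp s / d)
    simp only [hgdef]; linarith
  have hgderiv : ∀ s : ℝ, HasDerivAt g ((1 + g s) * ((1+s) * Real.exp s / d)) s := by
    intro s
    have h1 : HasDerivAt (fun x : ℝ => x * Real.exp x)
        (1 * Real.exp s + s * Real.exp s) s :=
      (hasDerivAt_id s).mul (Real.hasDerivAt_exp s)
    have h2 := h1.div_const (d:ℝ)
    have h3 := (Real.hasDerivAt_exp (s * Real.exp s / d)).comp s h2
    have h4 := h3.sub_const 1
    have he : (1 + g s) * ((1+s) * Real.exp s / d)
        = Real.exp (s * Real.exp s / d) * ((1 * Real.exp s + s * Real.exp s) / d) := by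
      have : 1 + g s = Real.exp (s * Real.exp s / d) := by simp [hgdef]
      rw [this]; ring
    rw [he]
    exact h4
  have hPg : ∀ s : ℝ, 0 ≤ s → 0 < indPoly G (g s) :=
    fun s hs => indPoly_pos G (hgnonneg s hs)
  -- Φ has explicit derivative at every s ≥ 0
  have hΦderiv : ∀ s : ℝ, 0 ≤ s → HasDerivAt Φ
      ((∑ I ∈ indSets G, (I.card : ℝ) * (g s) ^ (I.card - 1))
          * ((1 + g s) * ((1+s) * Real.exp s / d)) / indPoly G (g s)
        - ((n:ℝ)/d) * (1 + s)) s := by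
    intro s hs
    have hcomp : HasDerivAt (fun x => indPoly G (g x))
        ((∑ I ∈ indSets G, (I.card : ℝ) * (g s) ^ (I.card - 1))
          * ((1 + g s) * ((1+s) * Real.exp s / d))) s :=
      (indPoly_hasDerivAt G (g s)).comp s (hgderiv s)
    have hlog := hcomp.log (ne_of_gt (hPg s hs))
    have hpoly : HasDerivAt (fun x : ℝ => ((n:ℝ)/d) * (x + x^2/2))
        (((n:ℝ)/d) * (1 + s)) s := by
      have hb : HasDerivAt (fun x : ℝ => x + x^2/2) (1 + s) s := by
        have h5 : HasDerivAt (fun x : ℝ => x^2) ((2:ℕ) * s ^ (2-1)) s := hasDerivAt_pow 2 s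
        have h6 := (hasDerivAt_id s).add (h5.div_const 2)
        have he : (1:ℝ) + s = 1 + (2:ℕ) * s ^ (2-1) / 2 := by norm_num
        rw [he]; exact h6
      exact hb.const_mul ((n:ℝ)/d)
    exact hlog.sub hpoly
  -- derivative is nonnegative on (0, w)
  have hderiv_nonneg : ∀ s ∈ Set.Ioo (0:ℝ) w, 0 ≤ deriv Φ s := by
    intro s hsmem
    obtain ⟨hs0, _⟩ := hsmem
    rw [(hΦderiv s hs0.le).deriv]
    set t : ℝ := g s with htdef
    have ht : 0 < t := hgpos s hs0
    have h1t : (0:ℝ) < 1 + t := by linarith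
    have hse : s * Real.exp s = (d : ℝ) * Real.log (1+t) := by
      have : (1:ℝ) + t = Real.exp (s * Real.exp s / d) := by simp [htdef, hgdef]
      rw [this, Real.log_exp]
      field_simp
    have hstar := star G hn htf hdeg ht hs0 hse
    have hP := hPg s hs0.le
    have hDeq : deriv (indPoly G) t = ∑ I ∈ indSets G, (I.card : ℝ) * t ^ (I.card - 1) :=
      (indPoly_hasDerivAt G t).deriv
    rw [← hDeq]
    have hgd : (0:ℝ) ≤ (1 + t) * ((1+s) * Real.exp s / d) := by positivity
    have h2 := mul_le_mul_of_nonneg_right hstar hgd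
    -- LHS of h2 equals (n/d)*(1+s) * indPoly G t
    have hee : Real.exp (-s) * Real.exp s = 1 := by rw [← Real.exp_add]; simp
    have h1tne : (1+t) ≠ 0 := ne_of_gt h1t
    have h3 : (n:ℝ) * Real.exp (-s) / (1+t) * indPoly G t * ((1 + t) * ((1+s) * Real.exp s / d))
        = ((n:ℝ)/d) * (1+s) * indPoly G t := by
      calc (n:ℝ) * Real.exp (-s) / (1+t) * indPoly G t * ((1 + t) * ((1+s) * Real.exp s / d))
          = ((n:ℝ)/d) * (1+s) * indPoly G t * (Real.exp (-s) * Real.exp s)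
            * ((1+t)/(1+t)) := by ring
        _ = ((n:ℝ)/d) * (1+s) * indPoly G t := by
            rw [hee, div_self h1tne]; ring
    rw [h3] at h2
    rw [sub_nonneg, le_div_iff₀ hP]
    exact le_of_le_of_eq h2 (by rw [hDeq])
  -- monotonicity
  have hcont : ContinuousOn Φ (Set.Icc 0 w) := by
    apply ContinuousOn.sub
    · apply ContinuousOn.log
      · exact ((indPoly_continuous G).comp (by
          have : Continuous g := by
            simp only [hgdef]
            exact (Real.continuous_exp.comp ((continuous_id.mul Real.continuous_exp).div_const _)).sub continuous_const
          exact this)).continuousOn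
      · intro x hx
        exact ne_of_gt (hPg x hx.1)
    · exact (continuous_const.mul (continuous_id.add ((continuous_pow 2).div_const 2))).continuousOn
  have hdiff : DifferentiableOn ℝ Φ (interior (Set.Icc 0 w)) := by
    rw [interior_Icc]
    intro x hx
    exact ((hΦderiv x hx.1.le).differentiableAt).differentiableWithinAt
  have hmono : MonotoneOn Φ (Set.Icc 0 w) := by
    apply monotoneOn_of_deriv_nonneg (convex_Icc 0 w) hcont hdiff
    rw [interior_Icc]
    exact hderiv_nonneg
  have h0mem : (0:ℝ) ∈ Set.Icc (0:ℝ) w := Set.mem_Icc.mpr ⟨le_refl 0, hw.le⟩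
  have hwmem : w ∈ Set.Icc (0:ℝ) w := Set.mem_Icc.mpr ⟨hw.le, le_refl w⟩
  have hΦ0 : Φ 0 = 0 := by
    simp only [hΦdef, hg0, indPoly_zero, Real.log_one]
    ring
  have hΦw := hmono h0mem hwmem hw.le
  rw [hΦ0] at hΦw
  have hlog : ((n:ℝ)/d) * (w + w^2/2) ≤ Real.log (indPoly G l) := by
    simp only [hΦdef, hgw] at hΦw
    linarith
  have hPl : 0 < indPoly G l := indPoly_pos G hl.le
  rw [← Real.exp_log hPl]
  apply Real.exp_le_exp.mpr
  have heq : ((n:ℝ)/(2*d)) * (w^2 + 2*w) = ((n:ℝ)/d) * (w + w^2/2) := by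
    field_simp
    ring
  linarith
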